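/- Let C ∈ ℂ^{p×n} have full rank, α ∈ ℂ^{n×n} be positive definite Hermitian, and δ ∈ ℂ^{p×p} be positive semidefinite Hermitian. Define F(z) = i(Cα^{-1}C* + δ) + C(zI_n + iα)^{-1}C*. Then F is a Stieltjes function: F is analytic on the open right half-plane, F(z) + F(z)* is positive semidefinite there, and (1/(iz))F(z) + ((1/(iz))F(z))* is positive semidefinite there. -/

import Mathlib

open Matrix ComplexOrder



lemma Munit {n : ℕ} {α : Matrix (Fin n) (Fin n) ℂ} (hα : α.PosDef) {z : ℂ} (hz : 0 < z.re) :
    IsUnit (z • (1 : Matrix (Fin n) (Fin n) ℂ) + Complex.I • α).det := by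
  rw [isUnit_iff_ne_zero]
  intro hdet
  obtain ⟨v, hv, hMv⟩ := (Matrix.exists_mulVec_eq_zero_iff).2 hdet
  have h0 : star v ⬝ᵥ (z • (1 : Matrix (Fin n) (Fin n) ℂ) + Complex.I • α).mulVec v = 0 := by
    rw [hMv, dotProduct_zero]
  have hexp : star v ⬝ᵥ (z • (1 : Matrix (Fin n) (Fin n) ℂ) + Complex.I • α).mulVec v
      = z * (star v ⬝ᵥ v) + Complex.I * (star v ⬝ᵥ α.mulVec v) := by
    rw [add_mulVec, dotProduct_add, smul_mulVec, smul_mulVec, one_mulVec,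
      dotProduct_smul, dotProduct_smul, smul_eq_mul, smul_eq_mul]
  have ha : 0 < star v ⬝ᵥ v :=
    lt_of_le_of_ne (dotProduct_star_self_nonneg v) (fun h => hv (dotProduct_star_self_eq_zero.1 h.symm))
  have hb := hα.dotProduct_mulVec_pos hv
  rw [hexp] at h0
  have hare : 0 < (star v ⬝ᵥ v).re ∧ (star v ⬝ᵥ v).im = 0 := by
    rw [Complex.lt_def] at ha
    exact ⟨by simpa using ha.1, by simpa using ha.2.symm⟩
  have hbre : (star v ⬝ᵥ α.mulVec v).im = 0 := by
    rw [Complex.lt_def] at hb; simpa using hb.2.symm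
  have := congrArg Complex.re h0
  simp [Complex.add_re, Complex.mul_re, hare.2, hbre] at this
  rcases this with h | h
  · linarith
  · linarith [hare.1]


lemma detDiff {k : ℕ} {A : ℂ → Matrix (Fin k) (Fin k) ℂ} {s : Set ℂ}
    (h : ∀ i j, DifferentiableOn ℂ (fun z => A z i j) s) :
    DifferentiableOn ℂ (fun z => (A z).det) s := by
  simp only [Matrix.det_apply']
  apply DifferentiableOn.fun_sum
  intro σ _
  exact DifferentiableOn.const_mul (DifferentiableOn.fun_finsetProd (fun i _ => h (σ i) i)) _

lemma invEntryDiff {k : ℕ} {A : ℂ → Matrix (Fin k) (Fin k) ℂ} {s : Set ℂ}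
    (h : ∀ i j, DifferentiableOn ℂ (fun z => A z i j) s)
    (hdet : ∀ z ∈ s, (A z).det ≠ 0) (i j : Fin k) :
    DifferentiableOn ℂ (fun z => (A z)⁻¹ i j) s := by
  have heq : ∀ z ∈ s, (A z)⁻¹ i j = ((A z).det)⁻¹ * (A z).adjugate i j := by
    intro z hz
    rw [Matrix.inv_def, Matrix.smul_apply, Ring.inverse_eq_inv, smul_eq_mul]
  apply DifferentiableOn.congr _ heq
  apply DifferentiableOn.mul
  · exact DifferentiableOn.inv (detDiff h) hdet
  · simp only [Matrix.adjugate_apply]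
    apply detDiff
    intro a b
    by_cases ha : a = j
    · subst ha
      simp only [Matrix.updateRow_self]
      exact differentiableOn_const _
    · simp only [Matrix.updateRow_ne ha]
      exact h a b


lemma smulPSD {k : ℕ} {A : Matrix (Fin k) (Fin k) ℂ} (hA : A.PosSemidef) {c : ℂ}
    (hc : 0 ≤ c) : (c • A).PosSemidef := by
  rw [posSemidef_iff_dotProduct_mulVec]
  constructor
  · have hcr : (starRingEnd ℂ) c = c := by
      rw [Complex.conj_eq_iff_im]
      exact ((Complex.le_def.1 hc).2).symm
    unfold Matrix.IsHermitian
    rw [conjTranspose_smul, hA.1.eq]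
    exact congrArg (· • A) hcr
  · intro x
    rw [smul_mulVec, dotProduct_smul, smul_eq_mul]
    exact mul_nonneg hc (hA.dotProduct_mulVec_nonneg x)


section Aux
variable {n : ℕ} {α : Matrix (Fin n) (Fin n) ℂ} {z : ℂ}

-- algebra identities, assuming M := z•1 + I•α
lemma MH (hα : α.IsHermitian) :
    (z • (1 : Matrix (Fin n) (Fin n) ℂ) + Complex.I • α)ᴴ
      = (starRingEnd ℂ z) • (1 : Matrix (Fin n) (Fin n) ℂ) - Complex.I • α := by
  rw [conjTranspose_add, conjTranspose_smul, conjTranspose_smul, conjTranspose_one, hα.eq]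
  simp [Complex.conj_I, sub_eq_add_neg, neg_smul]

lemma MplusMH (hα : α.IsHermitian) :
    (z • (1 : Matrix (Fin n) (Fin n) ℂ) + Complex.I • α)
      + (z • (1 : Matrix (Fin n) (Fin n) ℂ) + Complex.I • α)ᴴ
      = ((2 * z.re : ℝ) : ℂ) • (1 : Matrix (Fin n) (Fin n) ℂ) := by
  rw [MH hα]
  rw [← Complex.add_conj]
  module

end Aux

section Core
variable {n : ℕ} {α : Matrix (Fin n) (Fin n) ℂ} {z : ℂ}

-- M⁻¹ + (M⁻¹)ᴴ = (2 Re z) • (M⁻¹ * (M⁻¹)ᴴ)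
lemma invSum (hα : α.IsHermitian)
    (hM : IsUnit (z • (1 : Matrix (Fin n) (Fin n) ℂ) + Complex.I • α).det) :
    (z • (1 : Matrix (Fin n) (Fin n) ℂ) + Complex.I • α)⁻¹
      + ((z • (1 : Matrix (Fin n) (Fin n) ℂ) + Complex.I • α)⁻¹)ᴴ
      = ((2 * z.re : ℝ) : ℂ) • ((z • (1 : Matrix (Fin n) (Fin n) ℂ) + Complex.I • α)⁻¹
          * ((z • (1 : Matrix (Fin n) (Fin n) ℂ) + Complex.I • α)⁻¹)ᴴ) := by
  set M := z • (1 : Matrix (Fin n) (Fin n) ℂ) + Complex.I • α with hMdef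
  have hMH : IsUnit Mᴴ.det := by rw [Matrix.det_conjTranspose]; exact hM.star
  have h1 : M⁻¹ᴴ = Mᴴ⁻¹ := Matrix.conjTranspose_nonsing_inv M
  calc M⁻¹ + M⁻¹ᴴ = M⁻¹ * (M + Mᴴ) * Mᴴ⁻¹ := by
        rw [h1, Matrix.mul_add, Matrix.add_mul, Matrix.mul_assoc M⁻¹ Mᴴ,
          Matrix.mul_nonsing_inv _ hMH, Matrix.nonsing_inv_mul _ hM]
        rw [Matrix.mul_one, Matrix.one_mul]
        abel
    _ = ((2 * z.re : ℝ) : ℂ) • (M⁻¹ * M⁻¹ᴴ) := by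
        rw [MplusMH hα, h1, Matrix.mul_smul, Matrix.smul_mul, Matrix.mul_one]

-- (1/(I z)) • M⁻¹ = M⁻¹ * α⁻¹ - (1/z) • α⁻¹
lemma invScaled (hz : z ≠ 0) (hαu : IsUnit α.det)
    (hM : IsUnit (z • (1 : Matrix (Fin n) (Fin n) ℂ) + Complex.I • α).det) :
    (1 / (Complex.I * z)) • (z • (1 : Matrix (Fin n) (Fin n) ℂ) + Complex.I • α)⁻¹
      = (z • (1 : Matrix (Fin n) (Fin n) ℂ) + Complex.I • α)⁻¹ * α⁻¹
        - (1 / z) • α⁻¹ := by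
  set M := z • (1 : Matrix (Fin n) (Fin n) ℂ) + Complex.I • α with hMdef
  have hiz : Complex.I * z ≠ 0 := mul_ne_zero Complex.I_ne_zero hz
  have key : Complex.I • α⁻¹ + M⁻¹ = (Complex.I * z) • (M⁻¹ * α⁻¹) := by
    have hy : α * α⁻¹ = 1 := Matrix.mul_nonsing_inv _ hαu
    have h2 : M * (Complex.I • α⁻¹) + 1 = (Complex.I * z) • α⁻¹ := by
      rw [hMdef, Matrix.add_mul, Matrix.smul_mul, Matrix.smul_mul, Matrix.one_mul,
        Matrix.mul_smul, hy]
      simp only [smul_smul]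
      rw [Complex.I_mul_I]
      module
    calc Complex.I • α⁻¹ + M⁻¹ = M⁻¹ * (M * (Complex.I • α⁻¹) + 1) := by
          rw [Matrix.mul_add, ← Matrix.mul_assoc, Matrix.nonsing_inv_mul _ hM,
            Matrix.one_mul, Matrix.mul_one]
      _ = (Complex.I * z) • (M⁻¹ * α⁻¹) := by rw [h2, Matrix.mul_smul]
  have := congrArg (fun X => (1 / (Complex.I * z)) • X) key
  simp only [smul_add, smul_smul, one_div, inv_mul_cancel₀ hiz, one_smul] at this
  have hinv : (Complex.I * z)⁻¹ * Complex.I = 1 / z := by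
    field_simp
  rw [eq_sub_iff_add_eq, ← this, hinv, one_div, one_div]
  module

end Core

section Core2
variable {n : ℕ} {α : Matrix (Fin n) (Fin n) ℂ} {z : ℂ}

lemma invAlphaSum (hα : α.IsHermitian) (hαu : IsUnit α.det)
    (hM : IsUnit (z • (1 : Matrix (Fin n) (Fin n) ℂ) + Complex.I • α).det) :
    (z • (1 : Matrix (Fin n) (Fin n) ℂ) + Complex.I • α)⁻¹ * α⁻¹
      + ((z • (1 : Matrix (Fin n) (Fin n) ℂ) + Complex.I • α)⁻¹ * α⁻¹)ᴴ
      = ((2 * z.re : ℝ) : ℂ) • ((z • (1 : Matrix (Fin n) (Fin n) ℂ) + Complex.I • α)⁻¹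
          * α⁻¹ * ((z • (1 : Matrix (Fin n) (Fin n) ℂ) + Complex.I • α)⁻¹)ᴴ) := by
  set M := z • (1 : Matrix (Fin n) (Fin n) ℂ) + Complex.I • α with hMdef
  have hMH : IsUnit Mᴴ.det := by rw [Matrix.det_conjTranspose]; exact hM.star
  have h1 : M⁻¹ᴴ = Mᴴ⁻¹ := Matrix.conjTranspose_nonsing_inv M
  have hy : α * α⁻¹ = 1 := Matrix.mul_nonsing_inv _ hαu
  have hy' : α⁻¹ * α = 1 := Matrix.nonsing_inv_mul _ hαu
  have hherm : (M⁻¹ * α⁻¹)ᴴ = α⁻¹ * Mᴴ⁻¹ := by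
    rw [conjTranspose_mul, h1, hα.inv.eq]
  have hmid : α⁻¹ * Mᴴ + M * α⁻¹ = ((2 * z.re : ℝ) : ℂ) • α⁻¹ := by
    rw [MH hα, hMdef, Matrix.mul_sub, Matrix.add_mul, Matrix.mul_smul, Matrix.mul_smul,
      Matrix.smul_mul, Matrix.smul_mul, Matrix.mul_one, Matrix.one_mul, hy, hy',
      ← Complex.add_conj]
    module
  calc M⁻¹ * α⁻¹ + (M⁻¹ * α⁻¹)ᴴ
      = M⁻¹ * (α⁻¹ * Mᴴ + M * α⁻¹) * Mᴴ⁻¹ := by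
        rw [hherm, Matrix.mul_add, Matrix.add_mul]
        rw [Matrix.mul_assoc M⁻¹ (α⁻¹ * Mᴴ), Matrix.mul_assoc α⁻¹ Mᴴ,
          Matrix.mul_nonsing_inv _ hMH, Matrix.mul_one]
        rw [← Matrix.mul_assoc M⁻¹ M, Matrix.nonsing_inv_mul _ hM, Matrix.one_mul]
    _ = ((2 * z.re : ℝ) : ℂ) • (M⁻¹ * α⁻¹ * M⁻¹ᴴ) := by
        rw [hmid, h1]
        rw [Matrix.mul_smul, Matrix.smul_mul]

end Core2

/-- The rational Stieltjes function `F(z) = i(Cα⁻¹C* + δ) + C(zIₙ + iα)⁻¹C*`. -/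
noncomputable def stieltjesFn (n p : ℕ) (C : Matrix (Fin p) (Fin n) ℂ)
    (α : Matrix (Fin n) (Fin n) ℂ) (δ : Matrix (Fin p) (Fin p) ℂ) (z : ℂ) :
    Matrix (Fin p) (Fin p) ℂ :=
  Complex.I • (C * α⁻¹ * Cᴴ + δ)
    + C * (z • (1 : Matrix (Fin n) (Fin n) ℂ) + Complex.I • α)⁻¹ * Cᴴ

theorem stmt11 (n p : ℕ) (C : Matrix (Fin p) (Fin n) ℂ)
    (α : Matrix (Fin n) (Fin n) ℂ) (δ : Matrix (Fin p) (Fin p) ℂ)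
    (hC : C.rank = min p n) (hα : α.PosDef) (hδ : δ.PosSemidef) :
    (∀ i j, DifferentiableOn ℂ (fun z : ℂ => stieltjesFn n p C α δ z i j) {z : ℂ | 0 < z.re}) ∧
    (∀ z : ℂ, 0 < z.re →
      (stieltjesFn n p C α δ z + (stieltjesFn n p C α δ z)ᴴ).PosSemidef) ∧
    (∀ z : ℂ, 0 < z.re →
      ((1 / (Complex.I * z)) • stieltjesFn n p C α δ z
        + ((1 / (Complex.I * z)) • stieltjesFn n p C α δ z)ᴴ).PosSemidef) := by
  have hαu : IsUnit α.det := (Matrix.isUnit_iff_isUnit_det _).1 hα.isUnit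
  have hMdet : ∀ z : ℂ, 0 < z.re →
      IsUnit (z • (1 : Matrix (Fin n) (Fin n) ℂ) + Complex.I • α).det :=
    fun z hz => Munit hα hz
  refine ⟨?_, ?_, ?_⟩
  · -- differentiability
    intro i j
    have hA : ∀ k l, DifferentiableOn ℂ
        (fun z : ℂ => (z • (1 : Matrix (Fin n) (Fin n) ℂ) + Complex.I • α) k l)
        {z : ℂ | 0 < z.re} := by
      intro k l
      simp only [Matrix.add_apply, Matrix.smul_apply, smul_eq_mul]
      exact ((differentiableOn_id.mul_const _).add (differentiableOn_const _))
    have hinv : ∀ k l, DifferentiableOn ℂ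
        (fun z : ℂ => (z • (1 : Matrix (Fin n) (Fin n) ℂ) + Complex.I • α)⁻¹ k l)
        {z : ℂ | 0 < z.re} :=
      invEntryDiff hA (fun z hz => (hMdet z hz).ne_zero) 
    simp only [stieltjesFn, Matrix.add_apply, Matrix.smul_apply, Matrix.mul_apply]
    apply DifferentiableOn.add (differentiableOn_const _)
    apply DifferentiableOn.fun_sum
    intro l _
    apply DifferentiableOn.mul_const
    apply DifferentiableOn.fun_sum
    intro k _
    exact (hinv k l).const_mul _
  · -- F + Fᴴ PSD
    intro z hz
    set M := z • (1 : Matrix (Fin n) (Fin n) ℂ) + Complex.I • α with hMdef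
    have hMu := hMdet z hz
    have hX : (C * α⁻¹ * Cᴴ + δ)ᴴ = C * α⁻¹ * Cᴴ + δ := by
      rw [conjTranspose_add, conjTranspose_mul, conjTranspose_mul,
        conjTranspose_conjTranspose, hα.1.inv.eq, hδ.1.eq, Matrix.mul_assoc]
    have hFH : (stieltjesFn n p C α δ z)ᴴ
        = (-Complex.I) • (C * α⁻¹ * Cᴴ + δ) + C * M⁻¹ᴴ * Cᴴ := by
      rw [stieltjesFn, conjTranspose_add, conjTranspose_smul, conjTranspose_mul,
        conjTranspose_mul, conjTranspose_conjTranspose, hX]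
      simp [Complex.conj_I, Matrix.mul_assoc]
      rfl
    have hEq : stieltjesFn n p C α δ z + (stieltjesFn n p C α δ z)ᴴ
        = ((2 * z.re : ℝ) : ℂ) • ((C * M⁻¹) * (C * M⁻¹)ᴴ) := by
      rw [hFH, stieltjesFn]
      have h2 : Complex.I • (C * α⁻¹ * Cᴴ + δ) + C * M⁻¹ * Cᴴ
          + ((-Complex.I) • (C * α⁻¹ * Cᴴ + δ) + C * M⁻¹ᴴ * Cᴴ)
          = C * (M⁻¹ + M⁻¹ᴴ) * Cᴴ := by
        rw [Matrix.mul_add, Matrix.add_mul]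
        module
      rw [h2, invSum hα.1 hMu, conjTranspose_mul, Matrix.mul_smul, Matrix.smul_mul]
      simp [Matrix.mul_assoc]
      rfl
    rw [hEq]
    exact smulPSD (posSemidef_self_mul_conjTranspose _) (by
      rw [Complex.le_def]; constructor <;> simp; positivity)
  · -- Stieltjes positivity
    intro z hz
    have hzne : z ≠ 0 := fun h => by simp [h] at hz
    set M := z • (1 : Matrix (Fin n) (Fin n) ℂ) + Complex.I • α with hMdef
    have hMu := hMdet z hz
    have hiz : Complex.I * z ≠ 0 := mul_ne_zero Complex.I_ne_zero hzne
    have hscal : (1 / (Complex.I * z)) * Complex.I = 1 / z := by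
      field_simp
    have hG : (1 / (Complex.I * z)) • stieltjesFn n p C α δ z
        = (1 / z) • δ + C * (M⁻¹ * α⁻¹) * Cᴴ := by
      rw [stieltjesFn, smul_add, smul_smul, hscal]
      have h3 : (1 / (Complex.I * z)) • (C * M⁻¹ * Cᴴ)
          = C * ((1 / (Complex.I * z)) • M⁻¹) * Cᴴ := by
        rw [Matrix.mul_smul, Matrix.smul_mul]
      rw [h3, invScaled hzne hαu hMu]
      rw [Matrix.mul_sub, Matrix.sub_mul, Matrix.mul_smul, Matrix.smul_mul]
      module
    rw [hG]
    have hGH : ((1 / z) • δ + C * (M⁻¹ * α⁻¹) * Cᴴ)ᴴ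
        = (starRingEnd ℂ (1 / z)) • δ + C * (M⁻¹ * α⁻¹)ᴴ * Cᴴ := by
      rw [conjTranspose_add, conjTranspose_smul, hδ.1.eq, conjTranspose_mul,
        conjTranspose_mul, conjTranspose_conjTranspose, Matrix.mul_assoc]
      rfl
    rw [hGH]
    have hEq : (1 / z) • δ + C * (M⁻¹ * α⁻¹) * Cᴴ
        + ((starRingEnd ℂ (1 / z)) • δ + C * (M⁻¹ * α⁻¹)ᴴ * Cᴴ)
        = ((2 * (1 / z).re : ℝ) : ℂ) • δ
          + ((2 * z.re : ℝ) : ℂ) • ((C * M⁻¹) * α⁻¹ * (C * M⁻¹)ᴴ) := by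
      have h4 : (1 / z) • δ + C * (M⁻¹ * α⁻¹) * Cᴴ
          + ((starRingEnd ℂ (1 / z)) • δ + C * (M⁻¹ * α⁻¹)ᴴ * Cᴴ)
          = ((1 / z) + starRingEnd ℂ (1 / z)) • δ
            + C * ((M⁻¹ * α⁻¹) + (M⁻¹ * α⁻¹)ᴴ) * Cᴴ := by
        rw [Matrix.mul_add, Matrix.add_mul]
        module
      rw [h4, Complex.add_conj, invAlphaSum hα.1 hαu hMu, conjTranspose_mul,
        Matrix.mul_smul, Matrix.smul_mul]
      simp [Matrix.mul_assoc]
      rfl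
    rw [hEq]
    have hc1 : (0:ℂ) ≤ ((2 * (1 / z).re : ℝ) : ℂ) := by
      rw [Complex.le_def]
      refine ⟨?_, by simp⟩
      simp only [Complex.zero_re, Complex.ofReal_re, one_div, Complex.inv_re]
      exact mul_nonneg (by norm_num) (div_nonneg hz.le (Complex.normSq_nonneg z))
    have hc2 : (0:ℂ) ≤ ((2 * z.re : ℝ) : ℂ) := by
      rw [Complex.le_def]; constructor <;> simp; positivity
    exact (smulPSD hδ hc1).add
      (smulPSD (hα.inv.posSemidef.mul_mul_conjTranspose_same (C * M⁻¹)) hc2)
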